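/- Fix β > 0, N₀ > 0, Ex > 0, and let σ*² be the unique positive fixed point of σ² = N₀ + β·Ex·σ²/(Ex+σ²). Then σ*² is strictly increasing in β and strictly increasing in N₀, and σ*² ≥ N₀ with equality only if β = 0. -/

import Mathlib

lemma stmt_8_aux (Ex β N s : ℝ) (hEx : 0 < Ex) (hβ : 0 ≤ β) (hN : 0 < N)
    (hs : 0 < s) (heq : s = N + β * Ex * s / (Ex + s)) :
    s * (Ex + s) = N * (Ex + s) + β * Ex * s ∧ β * Ex < Ex + s := by
  have hd : Ex + s > 0 := by linarith
  have hpoly : s * (Ex + s) = N * (Ex + s) + β * Ex * s := by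
    field_simp at heq
    linarith [heq]
  constructor
  · exact hpoly
  · nlinarith [mul_pos hN hd]

theorem stmt_8 (Ex : ℝ) (hEx : 0 < Ex) :
    (∀ β₁ β₂ N₀ s₁ s₂ : ℝ, 0 < N₀ → 0 ≤ β₁ → β₁ < β₂ → 0 < s₁ → 0 < s₂ →
      s₁ = N₀ + β₁ * Ex * s₁ / (Ex + s₁) → s₂ = N₀ + β₂ * Ex * s₂ / (Ex + s₂) →
      s₁ < s₂) ∧
    (∀ β N₁ N₂ s₁ s₂ : ℝ, 0 ≤ β → 0 < N₁ → N₁ < N₂ → 0 < s₁ → 0 < s₂ →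
      s₁ = N₁ + β * Ex * s₁ / (Ex + s₁) → s₂ = N₂ + β * Ex * s₂ / (Ex + s₂) →
      s₁ < s₂) ∧
    (∀ β N₀ s : ℝ, 0 ≤ β → 0 < N₀ → 0 < s →
      s = N₀ + β * Ex * s / (Ex + s) → N₀ ≤ s ∧ (s = N₀ → β = 0)) := by
  refine ⟨?_, ?_, ?_⟩
  · intro β₁ β₂ N₀ s₁ s₂ hN hβ₁ hβ hs₁ hs₂ h₁ h₂
    obtain ⟨e₁, b₁⟩ := stmt_8_aux Ex β₁ N₀ s₁ hEx hβ₁ hN hs₁ h₁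
    obtain ⟨e₂, b₂⟩ := stmt_8_aux Ex β₂ N₀ s₂ hEx (by linarith) hN hs₂ h₂
    by_contra h
    push_neg at h
    have hbr : 0 < (Ex + s₁) * (Ex + s₂) - β₁ * Ex * Ex := by
      nlinarith [mul_lt_mul_of_pos_right b₁ hEx, mul_pos (show (0:ℝ) < Ex + s₁ by linarith) hs₂]
    have hid : (s₁ - s₂) * ((Ex + s₁) * (Ex + s₂) - β₁ * Ex * Ex)
        + Ex * (β₂ - β₁) * s₂ * (Ex + s₁) = 0 := by
      linear_combination (Ex + s₂) * e₁ - (Ex + s₁) * e₂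
    nlinarith [mul_nonneg (sub_nonneg.2 h) hbr.le,
      mul_pos (mul_pos (mul_pos hEx (sub_pos.2 hβ)) hs₂) (show (0:ℝ) < Ex + s₁ by linarith)]
  · intro β N₁ N₂ s₁ s₂ hβ hN₁ hN hs₁ hs₂ h₁ h₂
    obtain ⟨e₁, b₁⟩ := stmt_8_aux Ex β N₁ s₁ hEx hβ hN₁ hs₁ h₁
    obtain ⟨e₂, b₂⟩ := stmt_8_aux Ex β N₂ s₂ hEx hβ (by linarith) hs₂ h₂
    by_contra h
    push_neg at h
    have hbr : 0 < (Ex + s₁) * (Ex + s₂) - β * Ex * Ex := by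
      nlinarith [mul_lt_mul_of_pos_right b₁ hEx, mul_pos (show (0:ℝ) < Ex + s₁ by linarith) hs₂]
    have hid : (s₁ - s₂) * ((Ex + s₁) * (Ex + s₂) - β * Ex * Ex)
        = (N₁ - N₂) * ((Ex + s₁) * (Ex + s₂)) := by
      linear_combination (Ex + s₂) * e₁ - (Ex + s₁) * e₂
    nlinarith [mul_nonneg (sub_nonneg.2 h) hbr.le,
      mul_pos (sub_pos.2 hN) (mul_pos (show (0:ℝ) < Ex + s₁ by linarith) (show (0:ℝ) < Ex + s₂ by linarith))]
  · intro β N₀ s hβ hN hs heq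
    have hd : Ex + s > 0 := by linarith
    have hnn : 0 ≤ β * Ex * s / (Ex + s) :=
      div_nonneg (mul_nonneg (mul_nonneg hβ hEx.le) hs.le) hd.le
    constructor
    · linarith
    · intro hse
      have : β * Ex * s / (Ex + s) = 0 := by linarith
      have h0 : β * Ex * s = 0 := by
        field_simp at this; rw [mul_zero] at this; exact this
      rcases mul_eq_zero.1 h0 with h' | h'
      · rcases mul_eq_zero.1 h' with h'' | h''
        · exact h''
        · linarith
      · linarith
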